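/- Let T be a totally ordered set and endow the set of ideals Idl(T) with the topology in which a subset C is closed if and only if for every nonempty subfamily V ⊆ C, the union ⋃V belongs to C and, whenever ⋂V is nonempty, ⋂V belongs to C. Then this assignment is a genuine topology (the closed sets are stable under arbitrary intersections and finite unions), and it coincides with the order topology on the linearly ordered set Idl(T). -/

import Mathlib

/-- An ideal of a linearly ordered set: a nonempty downward-closed subset. -/
def IsIdeal {T : Type*} [LinearOrder T] (I : Set T) : Prop :=
  I.Nonempty ∧ ∀ ⦃x y : T⦄, x ≤ y → y ∈ I → x ∈ I

theorem IsIdeal.total {T : Type*} [LinearOrder T] {I J : Set T}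
    (hI : IsIdeal I) (hJ : IsIdeal J) : I ⊆ J ∨ J ⊆ I := by
  by_cases h : I ⊆ J
  · exact Or.inl h
  · right
    obtain ⟨a, haI, haJ⟩ : ∃ a, a ∈ I ∧ a ∉ J := by
      simpa [Set.subset_def] using h
    intro b hbJ
    rcases le_total b a with hba | hab
    · exact hI.2 hba haI
    · exact absurd (hJ.2 hab hbJ) haJ

/-- The closed sets of the order topology on `Idl T` are precisely the subsets
stable under arbitrary nonempty element-wise unions and all admissible (i.e.
nonempty) element-wise intersections.  In particular the latter collection of
sets is the collection of closed sets of a genuine topology, namely the order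
topology on the linearly ordered set of ideals. -/
theorem ziegler_closed_iff_order_closed {T : Type*} [LinearOrder T] :
    ∀ s : Set {I : Set T // IsIdeal I},
      @IsClosed _ (Preorder.topology {I : Set T // IsIdeal I}) s ↔
        ∀ V ⊆ s, V.Nonempty →
          (∀ hU : IsIdeal (⋃ I ∈ V, (I : Set T)),
              (⟨⋃ I ∈ V, (I : Set T), hU⟩ : {I : Set T // IsIdeal I}) ∈ s) ∧
          (∀ hM : IsIdeal (⋂ I ∈ V, (I : Set T)),
              (⟨⋂ I ∈ V, (I : Set T), hM⟩ : {I : Set T // IsIdeal I}) ∈ s) := by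
  letI : LinearOrder {I : Set T // IsIdeal I} :=
    { (inferInstance : PartialOrder {I : Set T // IsIdeal I}) with
      le_total := fun I J => I.2.total J.2
      toDecidableLE := fun _ _ => Classical.dec _ }
  letI : TopologicalSpace {I : Set T // IsIdeal I} :=
    Preorder.topology {I : Set T // IsIdeal I}
  haveI : OrderTopology {I : Set T // IsIdeal I} := ⟨rfl⟩
  intro s
  constructor
  · intro hs V hVs hVne
    have hVcl : closure V ⊆ s := by
      calc closure V ⊆ closure s := closure_mono hVs
      _ = s := hs.closure_eq
    constructor
    · intro hU
      refine hVcl ((isLUB_iff_le_iff.mpr ?_ : IsLUB V _).mem_closure hVne)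
      intro b
      constructor
      · intro h J hJ
        exact le_trans (by exact Set.subset_biUnion_of_mem hJ) h
      · intro h
        exact Set.iUnion₂_subset fun J hJ => h hJ
    · intro hM
      refine hVcl ((isGLB_iff_le_iff.mpr ?_ : IsGLB V _).mem_closure hVne)
      intro b
      constructor
      · intro h J hJ
        exact le_trans h (by exact Set.biInter_subset_of_mem hJ)
      · intro h
        exact Set.subset_iInter₂ fun J hJ => h hJ
  · intro H
    rw [← isOpen_compl_iff, isOpen_iff_mem_nhds]
    intro x hx
    set A : Set {I : Set T // IsIdeal I} := {y ∈ s | y < x} with hA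
    set B : Set {I : Set T // IsIdeal I} := {y ∈ s | x < y} with hB
    have hsplit : ∀ y ∈ s, y ∈ A ∨ y ∈ B := by
      intro y hy
      rcases lt_or_gt_of_ne (fun h : y = x => hx (h ▸ hy)) with h | h
      · exact Or.inl ⟨hy, h⟩
      · exact Or.inr ⟨hy, h⟩
    -- candidate bounds
    have hAu : ∀ hA' : A.Nonempty, ∃ u ∈ s, u < x ∧ ∀ y ∈ A, y ≤ u := by
      intro hA'
      have hUideal : IsIdeal (⋃ I ∈ A, (I : Set T)) := by
        obtain ⟨a, ha⟩ := hA'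
        constructor
        · obtain ⟨t, ht⟩ := a.2.1
          exact ⟨t, Set.mem_biUnion ha ht⟩
        · intro p q hpq hq
          obtain ⟨I, hI, hqI⟩ := Set.mem_iUnion₂.mp hq
          exact Set.mem_biUnion hI (I.2.2 hpq hqI)
      refine ⟨⟨_, hUideal⟩, (H A (fun y hy => hy.1) hA').1 hUideal, ?_, ?_⟩
      · have hle : (⟨_, hUideal⟩ : {I : Set T // IsIdeal I}) ≤ x :=
          Set.iUnion₂_subset fun J hJ => le_of_lt hJ.2
        refine lt_of_le_of_ne hle ?_
        intro h
        exact hx (h ▸ (H A (fun y hy => hy.1) hA').1 hUideal)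
      · intro y hy
        exact Set.subset_biUnion_of_mem hy
    have hBv : ∀ hB' : B.Nonempty, ∃ v ∈ s, x < v ∧ ∀ y ∈ B, v ≤ y := by
      intro hB'
      have hMideal : IsIdeal (⋂ I ∈ B, (I : Set T)) := by
        constructor
        · obtain ⟨t, ht⟩ := x.2.1
          exact ⟨t, Set.mem_iInter₂.mpr fun J hJ => le_of_lt hJ.2 ht⟩
        · intro p q hpq hq
          exact Set.mem_iInter₂.mpr fun J hJ =>
            J.2.2 hpq (Set.mem_iInter₂.mp hq J hJ)
      refine ⟨⟨_, hMideal⟩, (H B (fun y hy => hy.1) hB').2 hMideal, ?_, ?_⟩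
      · have hle : x ≤ (⟨_, hMideal⟩ : {I : Set T // IsIdeal I}) :=
          Set.subset_iInter₂ fun J hJ => le_of_lt hJ.2
        refine lt_of_le_of_ne hle ?_
        intro h
        exact hx (h ▸ (H B (fun y hy => hy.1) hB').2 hMideal)
      · intro y hy
        exact Set.biInter_subset_of_mem hy
    rcases Set.eq_empty_or_nonempty A with hA0 | hA'
    · rcases Set.eq_empty_or_nonempty B with hB0 | hB'
      · refine Filter.mem_of_superset Filter.univ_mem ?_
        intro y _ hy
        rcases hsplit y hy with h | h
        · exact absurd h (by simp [hA0])
        · exact absurd h (by simp [hB0])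
      · obtain ⟨v, hvs, hxv, hvB⟩ := hBv hB'
        refine Filter.mem_of_superset (IsOpen.mem_nhds isOpen_Iio hxv) ?_
        intro y hy hys
        rcases hsplit y hys with h | h
        · exact absurd rfl (ne_of_mem_of_not_mem h (by simp [hA0]))
        · exact absurd (lt_of_lt_of_le hy (hvB y h)) (lt_irrefl y)
    · obtain ⟨u, hus, hux, huA⟩ := hAu hA'
      rcases Set.eq_empty_or_nonempty B with hB0 | hB'
      · refine Filter.mem_of_superset (IsOpen.mem_nhds isOpen_Ioi hux) ?_
        intro y hy hys
        rcases hsplit y hys with h | h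
        · exact absurd (lt_of_le_of_lt (huA y h) hy) (lt_irrefl y)
        · exact absurd rfl (ne_of_mem_of_not_mem h (by simp [hB0]))
      · obtain ⟨v, hvs, hxv, hvB⟩ := hBv hB'
        refine Filter.mem_of_superset (IsOpen.mem_nhds isOpen_Ioo ⟨hux, hxv⟩) ?_
        intro y hy hys
        rcases hsplit y hys with h | h
        · exact absurd (lt_of_le_of_lt (huA y h) hy.1) (lt_irrefl y)
        · exact absurd (lt_of_lt_of_le hy.2 (hvB y h)) (lt_irrefl y)
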